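/- For every permutation σ of size n ≥ k and every pattern τ ∈ S_{k−1}, the number of consecutive occurrences of τ in σ differs from the sum over all π ∈ S_k whose first k−1 entries induce the pattern τ of cocc(π,σ) by at most 1. (The flow-balance relations of the overlap graph.) -/

import Mathlib

open Filter Finset

/-- The value of the permutation `σ` at a natural-number index (junk value `0` out of range). -/
def papp {n : ℕ} (σ : Equiv.Perm (Fin n)) (j : ℕ) : ℕ :=
  if h : j < n then (σ ⟨j, h⟩ : ℕ) else 0

/-- The number of consecutive occurrences of the pattern `π` in `σ`:
the number of intervals `i, i+1, …, i+k-1` of indices such that `σ` restricted to them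
is in the same relative order as `π`. -/
def cocc {k n : ℕ} (π : Equiv.Perm (Fin k)) (σ : Equiv.Perm (Fin n)) : ℕ :=
  ((Finset.range (n + 1 - k)).filter
    (fun i => ∀ a b : Fin k, π a < π b ↔ papp σ (i + (a : ℕ)) < papp σ (i + (b : ℕ)))).card

/-- The direct sum `τ ⊕ σ` of two permutations: `τ(1)…τ(m)(σ(1)+m)…(σ(n)+m)`. -/
def dsum {m n : ℕ} (τ : Equiv.Perm (Fin m)) (σ : Equiv.Perm (Fin n)) :
    Equiv.Perm (Fin (m + n)) :=
  finSumFinEquiv.permCongr (Equiv.sumCongr τ σ)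

/-- The pattern of a tuple of distinct values: the unique permutation in the same
relative order. -/
def patOf {j : ℕ} (f : Fin j → ℕ) : Equiv.Perm (Fin j) := (Tuple.sort f)⁻¹

/-- The pattern induced by the first `k` entries of a permutation of size `k+1`.
In the overlap graph `Ov(k+1)` this is the source of the edge labeled `π`. -/
def firstPat {k : ℕ} (π : Equiv.Perm (Fin (k + 1))) : Equiv.Perm (Fin k) :=
  patOf (fun i => (π i.castSucc : ℕ))

/-- The pattern induced by the last `k` entries of a permutation of size `k+1`.
In the overlap graph `Ov(k+1)` this is the target of the edge labeled `π`. -/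
def lastPat {k : ℕ} (π : Equiv.Perm (Fin (k + 1))) : Equiv.Perm (Fin k) :=
  patOf (fun i => (π i.succ : ℕ))

lemma patOf_lt_iff {j : ℕ} {f : Fin j → ℕ} (hf : Function.Injective f) (a b : Fin j) :
    patOf f a < patOf f b ↔ f a < f b := by
  have hmono : StrictMono (f ∘ Tuple.sort f) :=
    (Tuple.monotone_sort f).strictMono_of_injective
      (hf.comp (Tuple.sort f).injective)
  have h1 : ∀ c, f c = (f ∘ Tuple.sort f) (patOf f c) := by
    intro c; simp [patOf, Function.comp]
  rw [h1 a, h1 b, hmono.lt_iff_lt]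

lemma eq_patOf {j : ℕ} {f : Fin j → ℕ} (hf : Function.Injective f)
    (π : Equiv.Perm (Fin j)) (h : ∀ a b, π a < π b ↔ f a < f b) : π = patOf f := by
  have hg : StrictMono (fun a => patOf f (π⁻¹ a)) := by
    intro a b hab
    rw [patOf_lt_iff hf, ← h]
    simpa using hab
  have hid : (fun a => patOf f (π⁻¹ a)) = (id : Fin j → Fin j) := by
    haveI inst : WellFoundedLT (Fin j) := inferInstance
    refine (@StrictMono.range_inj (Fin j) (Fin j) _ _ inst _ _ hg
      (strictMono_id : StrictMono (id : Fin j → Fin j))).1 ?_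
    have : (fun a => patOf f (π⁻¹ a)) = (patOf f) ∘ (π⁻¹ : Equiv.Perm (Fin j)) := rfl
    rw [this, Set.range_comp, Set.range_eq_univ.2 (π⁻¹ : Equiv.Perm (Fin j)).surjective,
      Set.image_univ, Set.range_eq_univ.2 (patOf f).surjective, Set.range_id]
  ext a : 1
  have := congrFun hid (π a)
  simp only [Equiv.symm_apply_apply, Equiv.Perm.inv_def, id] at this
  exact this.symm

lemma window_inj {j n : ℕ} (σ : Equiv.Perm (Fin n)) (i : ℕ) (h : i + j ≤ n) :
    Function.Injective (fun a : Fin j => papp σ (i + (a : ℕ))) := by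
  intro a b hab
  have ha : i + (a : ℕ) < n := lt_of_lt_of_le (by omega) le_rfl
  have hb : i + (b : ℕ) < n := by omega
  simp only [papp, dif_pos ha, dif_pos hb] at hab
  have h2 := σ.injective (Fin.val_injective hab)
  have h3 : i + (a : ℕ) = i + (b : ℕ) := congrArg Fin.val h2
  exact Fin.val_injective (by omega)

/-- Flow-balance: for `σ` of size `n ≥ k+1` and a pattern `τ` of size `k`, the number of
consecutive occurrences of `τ` in `σ` differs by at most `1` from the sum, over all patterns
`π` of size `k+1` whose first `k` entries induce `τ`, of `cocc(π,σ)`. -/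
theorem flow_balance {k n : ℕ} (hn : k + 1 ≤ n) (σ : Equiv.Perm (Fin n))
    (τ : Equiv.Perm (Fin k)) :
    |(cocc τ σ : ℤ) -
        ∑ π ∈ Finset.univ.filter (fun π : Equiv.Perm (Fin (k + 1)) => firstPat π = τ),
          (cocc π σ : ℤ)| ≤ 1 := by
  classical
  set w : ℕ → Fin (k + 1) → ℕ := fun i a => papp σ (i + (a : ℕ)) with hw
  set P : ℕ → Prop := fun i =>
    ∀ a b : Fin k, τ a < τ b ↔ papp σ (i + (a : ℕ)) < papp σ (i + (b : ℕ)) with hPdef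
  set S : Finset ℕ := (Finset.range (n - k)).filter P with hS
  have hwin : ∀ i < n - k, Function.Injective (w i) := by
    intro i hi
    exact window_inj σ i (by omega)
  have hM : ∀ i < n - k, ∀ π : Equiv.Perm (Fin (k + 1)),
      (∀ a b : Fin (k + 1), π a < π b ↔ w i a < w i b) ↔ π = patOf (w i) := by
    intro i hi π
    constructor
    · intro h; exact eq_patOf (hwin i hi) π h
    · rintro rfl; exact fun a b => patOf_lt_iff (hwin i hi) a b
  have hF : ∀ i < n - k, (firstPat (patOf (w i)) = τ ↔ P i) := by
    intro i hi
    have hg : Function.Injective (fun a : Fin k => ((patOf (w i)) a.castSucc : ℕ)) := by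
      intro a b hab
      exact Fin.castSucc_injective _ ((patOf (w i)).injective (Fin.val_injective hab))
    have hrel : ∀ a b : Fin k,
        (((patOf (w i)) a.castSucc : ℕ) < ((patOf (w i)) b.castSucc : ℕ) ↔
          papp σ (i + (a : ℕ)) < papp σ (i + (b : ℕ))) := by
      intro a b
      have h1 := patOf_lt_iff (hwin i hi) a.castSucc b.castSucc
      have h2 : w i a.castSucc = papp σ (i + (a : ℕ)) := by simp [hw]
      have h3 : w i b.castSucc = papp σ (i + (b : ℕ)) := by simp [hw]
      rw [← h2, ← h3, ← h1, Fin.lt_iff_val_lt_val]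
    constructor
    · intro hτ a b
      rw [← hτ]
      rw [← hrel a b]
      exact patOf_lt_iff hg a b
    · intro hQ
      exact (eq_patOf hg τ (fun a b => (hQ a b).trans (hrel a b).symm)).symm
  have hcocc : ∀ π : Equiv.Perm (Fin (k + 1)), cocc π σ =
      ((Finset.range (n - k)).filter
        (fun i => ∀ a b : Fin (k + 1), π a < π b ↔ w i a < w i b)).card := by
    intro π
    have hnk : n + 1 - (k + 1) = n - k := by omega
    simp only [cocc, hnk, hw]
  set A := Finset.univ.filter (fun π : Equiv.Perm (Fin (k + 1)) => firstPat π = τ) with hA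
  have hsum : ∑ π ∈ A, cocc π σ = S.card := by
    have hdisj : ∀ π ∈ A, ∀ π' ∈ A, π ≠ π' →
        Disjoint ((Finset.range (n - k)).filter
            (fun i => ∀ a b : Fin (k + 1), π a < π b ↔ w i a < w i b))
          ((Finset.range (n - k)).filter
            (fun i => ∀ a b : Fin (k + 1), π' a < π' b ↔ w i a < w i b)) := by
      intro π _ π' _ hne
      rw [Finset.disjoint_left]
      intro i hi hi'
      simp only [Finset.mem_filter, Finset.mem_range] at hi hi'
      exact hne (((hM i hi.1 π).1 hi.2).trans ((hM i hi'.1 π').1 hi'.2).symm)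
    calc ∑ π ∈ A, cocc π σ
        = ∑ π ∈ A, ((Finset.range (n - k)).filter
            (fun i => ∀ a b : Fin (k + 1), π a < π b ↔ w i a < w i b)).card :=
          Finset.sum_congr rfl fun π _ => hcocc π
      _ = (A.biUnion (fun π => (Finset.range (n - k)).filter
            (fun i => ∀ a b : Fin (k + 1), π a < π b ↔ w i a < w i b))).card :=
          (Finset.card_biUnion hdisj).symm
      _ = S.card := by
          congr 1
          ext i
          simp only [Finset.mem_biUnion, Finset.mem_filter, Finset.mem_range, hA,
            Finset.mem_univ, true_and, hS]
          constructor
          · rintro ⟨π, hπτ, hi, hMi⟩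
            refine ⟨hi, ?_⟩
            have := (hM i hi π).1 hMi
            rw [this] at hπτ
            exact (hF i hi).1 hπτ
          · rintro ⟨hi, hPi⟩
            exact ⟨patOf (w i), (hF i hi).2 hPi, hi, (hM i hi _).2 rfl⟩
  have hτc : cocc τ σ = S.card ∨ cocc τ σ = S.card + 1 := by
    have h1 : n + 1 - k = (n - k) + 1 := by omega
    have h2 : cocc τ σ = ((Finset.range ((n - k) + 1)).filter P).card := by
      simp only [cocc, h1, hPdef]
    rw [h2, Finset.range_add_one, Finset.filter_insert]
    by_cases hp : P (n - k)
    · right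
      rw [if_pos hp, Finset.card_insert_of_notMem (by simp [hS])]
    · left
      rw [if_neg hp]
  have hcast : ∑ π ∈ A, (cocc π σ : ℤ) = (S.card : ℤ) := by
    rw [← Nat.cast_sum, hsum]
  rw [hcast]
  rcases hτc with h | h <;> rw [h] <;> simp
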